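/- Suppose U = (U_1,…,U_N) with U_i ∈ L²(ℝ^d, M_i) is a local equilibrium, i.e. for every i = 1,…,N one has Σ_{j=1}^N k_{ij} η_j ∫ U_j dM_j = (Σ_{j=1}^N k_{ji}) η_i U_i(v) for M_i-almost every v ∈ ℝ^d. Then there is a constant c ∈ ℝ such that for every i, U_i = c holds M_i-almost everywhere. -/

import Mathlib

open Finset MeasureTheory

/-- A local equilibrium of the reaction operator is constant: if
`Σ_j k_{ij} η_j ∫ U_j dM_j = (Σ_j k_{ji}) η_i U_i(v)` for `M_i`-a.e. `v` and every `i`,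
then all the `U_i` are a.e. equal to one common constant. -/
theorem statement1
    (N : ℕ) (hN : 2 ≤ N) (d : ℕ) (hd : 1 ≤ d)
    (k : Fin N → Fin N → ℝ) (hk : ∀ i j, 0 ≤ k i j)
    -- Assumption A1
    (hA1 : ∀ i j : Fin N, Relation.ReflTransGen (fun a b => 0 < k b a) j i)
    (η : Fin N → ℝ) (hηpos : ∀ i, 0 < η i) (hηsum : ∑ i, η i = 1)
    (hηbal : ∀ i, ∑ j, (k i j * η j - k j i * η i) = 0)
    (M : Fin N → Measure (Fin d → ℝ))
    (hM : ∀ i, IsProbabilityMeasure (M i))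
    (U : Fin N → (Fin d → ℝ) → ℝ)
    (hU : ∀ i, MemLp (U i) 2 (M i))
    (heq : ∀ i, ∀ᵐ v ∂(M i),
      ∑ j, k i j * η j * (∫ w, U j w ∂(M j)) = (∑ j, k j i) * η i * U i v) :
    ∃ c : ℝ, ∀ i, ∀ᵐ v ∂(M i), U i v = c := by
  classical
  haveI : NeZero N := ⟨by omega⟩
  set a : Fin N → ℝ := fun i => ∫ w, U i w ∂(M i) with ha
  -- positivity of the outgoing rate sum
  have hKpos : ∀ i, 0 < ∑ j, k j i := by
    intro i
    haveI : Nontrivial (Fin N) := Fin.nontrivial_iff_two_le.mpr hN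
    obtain ⟨j, hj⟩ := exists_ne i
    have h := hA1 j i
    rcases Relation.ReflTransGen.cases_head h with h0 | ⟨y, hy, -⟩
    · exact absurd h0.symm hj
    · have hle : k y i ≤ ∑ j, k j i :=
        Finset.single_le_sum (fun m _ => hk m i) (mem_univ y)
      linarith
  have hbal : ∀ i, ∑ j, k i j * η j = (∑ j, k j i) * η i := by
    intro i
    have h := hηbal i
    rw [Finset.sum_sub_distrib] at h
    rw [Finset.sum_mul]
    linarith
  -- each U i is a.e. constant, equal to its mean a i
  have hconst : ∀ i, ∀ᵐ v ∂(M i), U i v = a i := by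
    intro i
    haveI := hM i
    have hpos : 0 < (∑ j, k j i) * η i := mul_pos (hKpos i) (hηpos i)
    have hc : ∀ᵐ v ∂(M i),
        U i v = (∑ j, k i j * η j * a j) / ((∑ j, k j i) * η i) := by
      filter_upwards [heq i] with v hv
      rw [eq_div_iff (ne_of_gt hpos)]
      linarith
    have hai : a i = (∑ j, k i j * η j * a j) / ((∑ j, k j i) * η i) := by
      have : a i = ∫ _ : (Fin d → ℝ),
          ((∑ j, k i j * η j * a j) / ((∑ j, k j i) * η i)) ∂(M i) :=
        integral_congr_ae hc
      rw [this, integral_const]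
      simp
    filter_upwards [hc] with v hv
    rw [hv, ← hai]
  have hint : ∀ i, (∑ j, k j i) * η i * a i = ∑ j, k i j * η j * a j := by
    intro i
    haveI := hM i
    have hpos : 0 < (∑ j, k j i) * η i := mul_pos (hKpos i) (hηpos i)
    have hc : ∀ᵐ v ∂(M i),
        (∑ j, k j i) * η i * U i v = (∑ j, k j i) * η i * a i := by
      filter_upwards [hconst i] with v hv
      rw [hv]
    have h2 : ∀ᵐ v ∂(M i),
        ∑ j, k i j * η j * a j = (∑ j, k j i) * η i * a i := by
      filter_upwards [heq i, hc] with v hv1 hv2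
      rw [hv1, hv2]
    have hne : (M i) Set.univ ≠ 0 := by simp
    obtain ⟨v, hv⟩ := (Filter.Eventually.exists h2)
    linarith
  have hzero : ∀ i, ∑ j, k i j * η j * (a j - a i) = 0 := by
    intro i
    have e1 : ∑ j, k i j * η j * (a j - a i)
        = (∑ j, k i j * η j * a j) - (∑ j, k i j * η j) * a i := by
      rw [Finset.sum_mul, ← Finset.sum_sub_distrib]
      exact Finset.sum_congr rfl fun j _ => by ring
    rw [e1, hbal i]
    have := hint i
    linarith
  -- maximum principle
  obtain ⟨i0, -, hmax⟩ := Finset.exists_max_image (univ : Finset (Fin N)) a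
    Finset.univ_nonempty
  have hstep : ∀ i, a i = a i0 → ∀ j, 0 < k i j → a j = a i0 := by
    intro i hi j hkij
    have hz := hzero i
    have hterm : ∀ m ∈ (univ : Finset (Fin N)), k i m * η m * (a m - a i) ≤ 0 := by
      intro m _
      have h1 := hmax m (mem_univ m)
      have h2 := (hηpos m).le
      have h3 := hk i m
      have h4 : a m - a i ≤ 0 := by rw [hi]; linarith
      have h5 : 0 ≤ k i m * η m := mul_nonneg h3 h2
      exact mul_nonpos_of_nonneg_of_nonpos h5 h4
    have h0 := (Finset.sum_eq_zero_iff_of_nonpos hterm).mp hz j (mem_univ j)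
    have hηj := hηpos j
    rcases mul_eq_zero.mp h0 with h | h
    · rcases mul_eq_zero.mp h with h | h
      · linarith
      · linarith
    · linarith
  have hall : ∀ j, a j = a i0 := by
    intro j
    have h := hA1 i0 j
    induction h using Relation.ReflTransGen.head_induction_on with
    | refl => rfl
    | head hxy _ ih => exact hstep _ ih _ hxy
  refine ⟨a i0, fun i => ?_⟩
  filter_upwards [hconst i] with v hv
  rw [hv, hall i]
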